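/- For probability distributions P = (p_1,...,p_n) and Q = (q_1,...,q_n) with all p_i, q_i > 0 and ∑p_i = ∑q_i = 1, the J-divergence satisfies J(P||Q) = 4[I(P||Q) + T(P||Q)], where J(P||Q) = ∑(p_i - q_i)·ln(p_i/q_i), I(P||Q) = (1/2)∑[p_i·ln(2p_i/(p_i+q_i)) + q_i·ln(2q_i/(p_i+q_i))], and T(P||Q) = ∑((p_i+q_i)/2)·ln((p_i+q_i)/(2·√(p_i·q_i))). -/
import Mathlib


theorem J_eq_four_I_plus_T (n : ℕ) (hn : 2 ≤ n) (p q : Fin n → ℝ)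
    (hp : ∀ i, 0 < p i) (hq : ∀ i, 0 < q i)
    (hps : ∑ i, p i = 1) (hqs : ∑ i, q i = 1) :
    (∑ i, (p i - q i) * Real.log (p i / q i)) =
      4 * ((1 / 2) * ∑ i, (p i * Real.log (2 * p i / (p i + q i)) +
              q i * Real.log (2 * q i / (p i + q i))) +
           ∑ i, ((p i + q i) / 2) *
              Real.log ((p i + q i) / (2 * Real.sqrt (p i * q i)))) := by
  have key : ∀ i, (p i - q i) * Real.log (p i / q i) =
      4 * ((1 / 2) * (p i * Real.log (2 * p i / (p i + q i)) +
              q i * Real.log (2 * q i / (p i + q i))) +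
           ((p i + q i) / 2) *
              Real.log ((p i + q i) / (2 * Real.sqrt (p i * q i)))) := by
    intro i
    have hpi := hp i; have hqi := hq i
    have hpq : 0 < p i + q i := by linarith
    have hpos : 0 < p i * q i := mul_pos hpi hqi
    have hsq : 0 < Real.sqrt (p i * q i) := Real.sqrt_pos.mpr hpos
    rw [Real.log_div hpi.ne' hqi.ne',
        Real.log_div (by positivity) hpq.ne',
        Real.log_div (by positivity) hpq.ne',
        Real.log_div hpq.ne' (by positivity),
        Real.log_mul two_ne_zero hpi.ne',
        Real.log_mul two_ne_zero hqi.ne',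
        Real.log_mul two_ne_zero hsq.ne',
        Real.log_sqrt hpos.le,
        Real.log_mul hpi.ne' hqi.ne']
    ring
  rw [Finset.sum_congr rfl (fun i _ => key i), ← Finset.mul_sum,
      Finset.sum_add_distrib, ← Finset.mul_sum]
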